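/- The quadratic polynomials Q[ε,ε'] := ∑_{σ ∈ (ℤ/2ℤ)^g} (−1)^{σ·ε'} x_σ x_{σ+ε}, taken over all pairs (ε, ε') ∈ (ℤ/2ℤ)^g × (ℤ/2ℤ)^g with ε·ε' = 0 (mod 2), form a basis of the vector space of homogeneous quadratic polynomials ℂ[x_σ : σ ∈ (ℤ/2ℤ)^g]₂; in particular there are exactly 2^{g−1}(2^g + 1) of them. -/

import Mathlib

open MvPolynomial

/-- The group `(ℤ/2ℤ)^g`. -/
abbrev Vg (g : ℕ) : Type := Fin g → ZMod 2

/-- The quadratic polynomial `Q[ε,ε'] := ∑_σ (−1)^{σ·ε'} x_σ x_{σ+ε}`. -/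
noncomputable def Qe {n : ℕ} (ε ε' : Vg n) : MvPolynomial (Vg n) ℂ :=
  ∑ σ : Vg n, ((-1 : ℂ) ^ (∑ i, σ i * ε' i : ZMod 2).val) • (X σ * X (σ + ε))

namespace QeAux
open Finsupp

noncomputable def ch (x : ZMod 2) : ℂ := (-1) ^ x.val

lemma zmod2_cases (x : ZMod 2) : x = 0 ∨ x = 1 := by revert x; decide

lemma ch_zero : ch 0 = 1 := rfl

lemma ch_one : ch 1 = -1 := by simp [ch, ZMod.val_one]

lemma ch_add (x y : ZMod 2) : ch (x + y) = ch x * ch y := by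
  have h11 : (1 + 1 : ZMod 2) = 0 := by decide
  rcases zmod2_cases x with rfl | rfl <;> rcases zmod2_cases y with rfl | rfl <;>
    simp [h11, ch_zero, ch_one]

lemma ch_sum {α : Type*} (s : Finset α) (f : α → ZMod 2) :
    ch (∑ i ∈ s, f i) = ∏ i ∈ s, ch (f i) := by
  classical
  induction s using Finset.cons_induction with
  | empty => simp [ch_zero]
  | cons a s ha ih => rw [Finset.sum_cons, Finset.prod_cons, ch_add, ih]

def bl {n : ℕ} (v w : Vg n) : ZMod 2 := ∑ i, v i * w i

lemma bl_comm {n : ℕ} (v w : Vg n) : bl v w = bl w v := by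
  simp [bl, mul_comm]

lemma bl_add_left {n : ℕ} (a b w : Vg n) : bl (a + b) w = bl a w + bl b w := by
  simp [bl, add_mul, Finset.sum_add_distrib]

lemma bl_add_right {n : ℕ} (v a b : Vg n) : bl v (a + b) = bl v a + bl v b := by
  simp [bl, mul_add, Finset.sum_add_distrib]

lemma sum_univ_zmod2 (f : ZMod 2 → ℂ) : ∑ a : ZMod 2, f a = f 0 + f 1 := by
  have h : (Finset.univ : Finset (ZMod 2)) = {0, 1} := by decide
  rw [h, Finset.sum_insert (by decide), Finset.sum_singleton]

lemma sum_ch_bl {n : ℕ} (v : Vg n) :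
    ∑ w : Vg n, ch (bl v w) = if v = 0 then (2 : ℂ) ^ n else 0 := by
  classical
  unfold bl
  simp_rw [ch_sum]
  have key := Finset.prod_univ_sum (fun _ : Fin n => (Finset.univ : Finset (ZMod 2)))
    (fun i a => ch (v i * a))
  rw [← Fintype.piFinset_univ, ← key]
  have h1 : ∀ i : Fin n, ∑ a : ZMod 2, ch (v i * a) = if v i = 0 then (2:ℂ) else 0 := by
    intro i
    rw [sum_univ_zmod2]
    rcases zmod2_cases (v i) with h | h <;> simp [h, ch_zero, ch_one] <;> norm_num
  simp_rw [h1]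
  by_cases hv : v = 0
  · simp [hv]
  · obtain ⟨i, hi⟩ : ∃ i, v i ≠ 0 := by
      by_contra h; push_neg at h; exact hv (funext fun i => h i)
    rw [if_neg hv]
    exact Finset.prod_eq_zero (Finset.mem_univ i) (if_neg hi)

lemma toMultiset_injective {α : Type*} : Function.Injective (Finsupp.toMultiset (α := α)) := by
  classical
  intro a b h
  have := congrArg Multiset.toFinsupp h
  rwa [Finsupp.toMultiset_toFinsupp, Finsupp.toMultiset_toFinsupp] at this

noncomputable def mm {n : ℕ} (σ τ : Vg n) : (Vg n →₀ ℕ) :=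
  Finsupp.single σ 1 + Finsupp.single τ 1

lemma toMultiset_mm {n : ℕ} (σ τ : Vg n) : Finsupp.toMultiset (mm σ τ) = {σ, τ} := by
  simp [mm, Finsupp.toMultiset_add, Finsupp.toMultiset_single]

lemma pair_eq_pair' {α : Type*} {a b c d : α} :
    ({a, b} : Multiset α) = {c, d} ↔ (a = c ∧ b = d) ∨ (a = d ∧ b = c) := by
  constructor
  · intro h
    rw [Multiset.insert_eq_cons, Multiset.insert_eq_cons, Multiset.cons_eq_cons] at h
    rcases h with ⟨h1, h2⟩ | ⟨h1, cs, h2, h3⟩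
    · exact Or.inl ⟨h1, by simpa using h2⟩
    · rw [Multiset.singleton_eq_cons_iff] at h2
      obtain ⟨rfl, rfl⟩ := h2
      rw [Multiset.singleton_eq_cons_iff] at h3
      exact Or.inr ⟨h3.1.symm, rfl⟩
  · rintro (⟨rfl, rfl⟩ | ⟨rfl, rfl⟩)
    · rfl
    · exact Multiset.pair_comm a b

lemma mm_eq_mm_iff {n : ℕ} {ρ ρ' σ τ : Vg n} :
    mm ρ ρ' = mm σ τ ↔ (ρ = σ ∧ ρ' = τ) ∨ (ρ = τ ∧ ρ' = σ) := by
  rw [← toMultiset_injective.eq_iff, toMultiset_mm, toMultiset_mm, pair_eq_pair']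

lemma vadd_self {n : ℕ} (v : Vg n) : v + v = 0 := by
  funext i
  rcases zmod2_cases (v i) with h | h <;> simp [h] <;> decide

lemma add_shift {n : ℕ} {a b v : Vg n} : a + v = b ↔ a = b + v := by
  constructor <;> rintro rfl <;> rw [add_assoc, vadd_self, add_zero]

lemma X_mul_X {n : ℕ} (σ τ : Vg n) :
    (X σ * X τ : MvPolynomial (Vg n) ℂ) = monomial (mm σ τ) 1 := by
  rw [X, X, monomial_mul, one_mul, mm]

lemma Qe_eq {n : ℕ} (ε ε' : Vg n) :
    Qe ε ε' = ∑ σ : Vg n, ch (bl σ ε') • (monomial (mm σ (σ + ε)) (1 : ℂ)) := by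
  unfold Qe ch bl
  simp_rw [X_mul_X]

/-- `Qe ε ε'` vanishes when `ε·ε' = 1`. -/
lemma Qe_eq_zero {n : ℕ} {ε ε' : Vg n} (h : bl ε ε' = 1) : Qe ε ε' = 0 := by
  have step : ∀ σ : Vg n, ch (bl (σ + ε) ε') • (monomial (mm (σ + ε) (σ + ε + ε)) (1 : ℂ))
      = -(ch (bl σ ε') • (monomial (mm σ (σ + ε)) (1 : ℂ))) := by
    intro σ
    have hmm : mm (σ + ε) σ = mm σ (σ + ε) := by
      rw [mm_eq_mm_iff]; exact Or.inr ⟨rfl, rfl⟩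
    rw [bl_add_left, ch_add, h, ch_one, add_assoc, vadd_self, add_zero, hmm,
      mul_neg_one, neg_smul]
  have key : Qe ε ε' = -Qe ε ε' := by
    calc Qe ε ε'
        = ∑ σ : Vg n, ch (bl (σ + ε) ε') • (monomial (mm (σ + ε) (σ + ε + ε)) (1 : ℂ)) := by
          rw [Qe_eq]
          exact (Fintype.sum_equiv (Equiv.addRight ε) _ _ (fun σ => rfl)).symm
      _ = ∑ σ : Vg n, -(ch (bl σ ε') • (monomial (mm σ (σ + ε)) (1 : ℂ))) :=
          Finset.sum_congr rfl (fun σ _ => step σ)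
      _ = -Qe ε ε' := by rw [Qe_eq, Finset.sum_neg_distrib]
  have h2 : (2 : ℂ) • Qe ε ε' = 0 := by
    rw [two_smul]; nth_rewrite 2 [key]; simp
  simpa [smul_eq_zero] using h2

lemma add_shift' {n : ℕ} {a b c : Vg n} : a + b = c ↔ b = a + c := by
  constructor
  · rintro rfl; rw [← add_assoc, vadd_self, zero_add]
  · rintro rfl; rw [← add_assoc, vadd_self, zero_add]

lemma inversion {n : ℕ} (σ τ : Vg n) :
    ∑ ε' : Vg n, ch (bl σ ε') • Qe (σ + τ) ε' = ((2:ℂ)^n) • (X σ * X τ) := by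
  simp_rw [Qe_eq, Finset.smul_sum, smul_smul]
  rw [Finset.sum_comm]
  have inner : ∀ ρ : Vg n,
      ∑ ε' : Vg n, ch (bl σ ε') * ch (bl ρ ε') = if σ + ρ = 0 then (2:ℂ)^n else 0 := by
    intro ρ
    simp_rw [← ch_add, ← bl_add_left]
    exact sum_ch_bl _
  calc ∑ ρ : Vg n, ∑ ε' : Vg n,
          (ch (bl σ ε') * ch (bl ρ ε')) • (monomial (mm ρ (ρ + (σ + τ))) (1:ℂ))
      = ∑ ρ : Vg n, (if σ + ρ = 0 then (2:ℂ)^n else 0)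
          • (monomial (mm ρ (ρ + (σ + τ))) (1:ℂ)) := by
        apply Finset.sum_congr rfl
        intro ρ _
        rw [← Finset.sum_smul, inner ρ]
    _ = ∑ ρ : Vg n, (if ρ = σ then ((2:ℂ)^n) • (monomial (mm ρ (ρ + (σ + τ))) (1:ℂ)) else 0) := by
        apply Finset.sum_congr rfl
        intro ρ _
        have hiff : σ + ρ = 0 ↔ ρ = σ := by
          rw [add_shift', add_zero]
        rw [ite_smul, zero_smul]
        congr 1
        · exact propext hiff
    _ = ((2:ℂ)^n) • (X σ * X τ) := by
        rw [Finset.sum_ite_eq' Finset.univ σ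
          (fun ρ => ((2:ℂ)^n) • (monomial (mm ρ (ρ + (σ + τ))) (1:ℂ)))]
        have : σ + (σ + τ) = τ := by rw [← add_assoc, vadd_self, zero_add]
        simp [this, X_mul_X]

lemma coeff_mm_Qe {n : ℕ} (τ ε δ δ' : Vg n) (hδ : bl δ δ' = 0) :
    coeff (mm τ (τ + ε)) (Qe δ δ')
      = if δ = ε then (if ε = 0 then (1:ℂ) else 2) * ch (bl τ δ') else 0 := by
  classical
  rw [Qe_eq, MvPolynomial.coeff_sum]
  simp_rw [coeff_smul, coeff_monomial, smul_eq_mul, mul_ite, mul_one, mul_zero]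
  by_cases hδε : δ = ε
  · subst hδε
    have hcond : ∀ ρ : Vg n, (mm ρ (ρ + δ) = mm τ (τ + δ)) ↔ (ρ = τ ∨ ρ = τ + δ) := by
      intro ρ
      rw [mm_eq_mm_iff]
      constructor
      · rintro (⟨rfl, -⟩ | ⟨rfl, -⟩)
        · exact Or.inl rfl
        · exact Or.inr rfl
      · rintro (rfl | rfl)
        · exact Or.inl ⟨rfl, rfl⟩
        · refine Or.inr ⟨rfl, ?_⟩
          rw [add_assoc, vadd_self, add_zero]
    simp_rw [hcond]
    rw [if_pos trivial]
    by_cases hε : δ = 0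
    · subst hε
      have : ∀ ρ : Vg n, (ρ = τ ∨ ρ = τ + 0) ↔ ρ = τ := by simp
      simp_rw [this]
      rw [Finset.sum_ite_eq' Finset.univ τ (fun ρ => ch (bl ρ δ')), if_pos (Finset.mem_univ τ),
        if_pos trivial, one_mul]
    · rw [if_neg hε]
      have hne : τ ≠ τ + δ := by
        intro h
        apply hε
        have h2 := add_shift'.mp h.symm
        rwa [vadd_self] at h2
      have hmem : ∀ ρ : Vg n, (ρ = τ ∨ ρ = τ + δ) ↔ ρ ∈ ({τ, τ + δ} : Finset (Vg n)) := by
        intro ρ; simp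
      simp_rw [hmem]
      rw [← Finset.sum_filter, Finset.filter_mem_eq_inter, Finset.univ_inter,
        Finset.sum_pair hne]
      rw [bl_add_left τ δ δ', ch_add, hδ, ch_zero, mul_one]
      ring
  · rw [if_neg hδε]
    apply Finset.sum_eq_zero
    intro ρ _
    rw [if_neg]
    rw [mm_eq_mm_iff]
    rintro (⟨rfl, h2⟩ | ⟨rfl, h2⟩)
    · exact hδε (add_left_cancel h2)
    · apply hδε
      rw [add_shift'] at h2
      rw [h2, add_right_comm, vadd_self, zero_add]

lemma L_Qe {n : ℕ} (ε ε' δ δ' : Vg n) (hδ : bl δ δ' = 0) :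
    ∑ τ : Vg n, ch (bl τ ε') * coeff (mm τ (τ + ε)) (Qe δ δ')
      = if δ = ε ∧ δ' = ε' then (if ε = 0 then (1:ℂ) else 2) * (2:ℂ)^n else 0 := by
  simp_rw [coeff_mm_Qe _ _ _ _ hδ]
  by_cases h1 : δ = ε
  · subst h1
    simp only [if_true, true_and]
    have : ∀ τ : Vg n, ch (bl τ ε') * ((if δ = 0 then (1:ℂ) else 2) * ch (bl τ δ'))
        = (if δ = 0 then (1:ℂ) else 2) * ch (bl τ (ε' + δ')) := by
      intro τ
      rw [bl_add_right, ch_add]; ring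
    simp_rw [this, bl_comm _ (ε' + δ')]
    rw [← Finset.mul_sum, sum_ch_bl]
    have hiff : ε' + δ' = 0 ↔ δ' = ε' := by
      rw [add_shift', add_zero]
    by_cases h2 : δ' = ε'
    · rw [if_pos (hiff.mpr h2), if_pos h2]
    · rw [if_neg (fun hc => h2 (hiff.mp hc)), if_neg h2, mul_zero]
  · rw [if_neg (show ¬(δ = ε ∧ δ' = ε') from fun hc => h1 hc.1)]
    apply Finset.sum_eq_zero
    intro τ _
    rw [if_neg h1, mul_zero]

lemma card_part (g : ℕ) (hg : 1 ≤ g) :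
    Nat.card {p : Vg g × Vg g // (∑ i, p.1 i * p.2 i : ZMod 2) = 0}
      = 2 ^ (g - 1) * (2 ^ g + 1) := by
  classical
  obtain ⟨k, rfl⟩ : ∃ k, g = k + 1 := ⟨g - 1, (Nat.succ_pred_eq_of_pos hg).symm⟩
  rw [Nat.card_eq_fintype_card]
  have hcast : (Fintype.card {p : Vg (k+1) × Vg (k+1) // (∑ i, p.1 i * p.2 i : ZMod 2) = 0} : ℂ)
      = ((2 ^ k * (2 ^ (k+1) + 1) : ℕ) : ℂ) := by
    rw [Fintype.card_subtype, Finset.card_filter]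
    push_cast
    have hhalf : ∀ p : Vg (k+1) × Vg (k+1),
        (if (∑ i, p.1 i * p.2 i : ZMod 2) = 0 then (1:ℂ) else 0)
          = (1 + ch (bl p.1 p.2)) / 2 := by
      intro p
      show (if bl p.1 p.2 = 0 then (1:ℂ) else 0) = _
      rcases zmod2_cases (bl p.1 p.2) with h | h <;> rw [h] <;> norm_num [ch_zero, ch_one]
    simp_rw [hhalf]
    rw [Fintype.sum_prod_type]
    have hN : (Fintype.card (Vg (k+1)) : ℂ) = 2 ^ (k+1) := by
      simp [Fintype.card_fun]
    calc (∑ v : Vg (k+1), ∑ w : Vg (k+1), (1 + ch (bl v w)) / 2)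
        = ∑ v : Vg (k+1), ((2:ℂ)^(k+1) + (if v = 0 then (2:ℂ)^(k+1) else 0)) / 2 := by
          apply Finset.sum_congr rfl
          intro v _
          rw [← Finset.sum_div]
          congr 1
          rw [Finset.sum_add_distrib, sum_ch_bl]
          congr 1
          rw [Finset.sum_const, nsmul_eq_mul, mul_one, Finset.card_univ, hN]
      _ = ((2:ℂ)^(k+1) * 2^(k+1) + 2^(k+1)) / 2 := by
          rw [← Finset.sum_div]
          congr 1
          rw [Finset.sum_add_distrib, Finset.sum_const, nsmul_eq_mul, Finset.card_univ, hN,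
            Finset.sum_ite_eq' Finset.univ (0 : Vg (k+1)) (fun _ => (2:ℂ)^(k+1)),
            if_pos (Finset.mem_univ _)]
      _ = (2:ℂ) ^ k * ((2:ℂ) ^ (k + 1) + 1) := by ring
  exact_mod_cast hcast

lemma span_part (g : ℕ) :
    Submodule.span ℂ
      (Set.range
        (fun p : {p : Vg g × Vg g // (∑ i, p.1 i * p.2 i : ZMod 2) = 0} => Qe p.1.1 p.1.2))
      = homogeneousSubmodule (Vg g) ℂ 2 := by
  classical
  apply le_antisymm
  · rw [Submodule.span_le]
    rintro _ ⟨p, rfl⟩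
    show Qe p.1.1 p.1.2 ∈ homogeneousSubmodule (Vg g) ℂ 2
    rw [Qe_eq]
    apply Submodule.sum_mem
    intro σ _
    apply Submodule.smul_mem
    rw [← X_mul_X, mem_homogeneousSubmodule]
    exact (isHomogeneous_X ℂ σ).mul (isHomogeneous_X ℂ _)
  · intro p hp
    rw [← support_sum_monomial_coeff p]
    apply Submodule.sum_mem
    intro d hd
    have hco : coeff d p ≠ 0 := MvPolynomial.mem_support_iff.mp hd
    have hdeg : d.degree = 2 := by
      rw [Finsupp.degree_eq_weight_one]
      exact (mem_homogeneousSubmodule _ _).mp hp hco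
    obtain ⟨σ, τ, rfl⟩ : ∃ σ τ, d = mm σ τ := by
      have hcard : Multiset.card (Finsupp.toMultiset d) = 2 := by
        rw [Finsupp.card_toMultiset]
        simpa [Finsupp.degree_apply, Finsupp.sum] using hdeg
      obtain ⟨σ, τ, h2⟩ := Multiset.card_eq_two.mp hcard
      exact ⟨σ, τ, toMultiset_injective (by rw [h2, toMultiset_mm])⟩
    have hmono : (monomial (mm σ τ)) (coeff (mm σ τ) p)
        = coeff (mm σ τ) p • (X σ * X τ) := by
      rw [X_mul_X, smul_monomial, smul_eq_mul, mul_one]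
    rw [hmono]
    apply Submodule.smul_mem
    have hx : (X σ * X τ : MvPolynomial (Vg g) ℂ)
        = ((2:ℂ)^g)⁻¹ • ∑ ε' : Vg g, ch (bl σ ε') • Qe (σ + τ) ε' := by
      rw [inversion, smul_smul, inv_mul_cancel₀ (pow_ne_zero g two_ne_zero), one_smul]
    rw [hx]
    apply Submodule.smul_mem
    apply Submodule.sum_mem
    intro ε' _
    apply Submodule.smul_mem
    rcases zmod2_cases (bl (σ + τ) ε') with h0 | h1
    · exact Submodule.subset_span ⟨⟨(σ + τ, ε'), h0⟩, rfl⟩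
    · rw [Qe_eq_zero h1]
      exact Submodule.zero_mem _

lemma indep_part (g : ℕ) :
    LinearIndependent ℂ
      (fun p : {p : Vg g × Vg g // (∑ i, p.1 i * p.2 i : ZMod 2) = 0} => Qe p.1.1 p.1.2) := by
  classical
  rw [Fintype.linearIndependent_iff]
  intro c hc
  rintro ⟨⟨ε, ε'⟩, h⟩
  have hL : ∑ τ : Vg g, ch (bl τ ε')
      * coeff (mm τ (τ + ε)) (∑ p : {p : Vg g × Vg g // (∑ i, p.1 i * p.2 i : ZMod 2) = 0}, c p • Qe p.1.1 p.1.2) = 0 := by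
    rw [hc]; simp
  simp_rw [MvPolynomial.coeff_sum, coeff_smul, smul_eq_mul, Finset.mul_sum] at hL
  rw [Finset.sum_comm] at hL
  have key : ∀ p : {p : Vg g × Vg g // (∑ i, p.1 i * p.2 i : ZMod 2) = 0}, ∑ τ : Vg g, ch (bl τ ε') * (c p * coeff (mm τ (τ + ε)) (Qe p.1.1 p.1.2))
      = c p * (if p.1.1 = ε ∧ p.1.2 = ε' then (if ε = 0 then (1:ℂ) else 2) * (2:ℂ)^g else 0) := by
    intro p
    rw [← L_Qe ε ε' p.1.1 p.1.2 p.2, Finset.mul_sum]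
    apply Finset.sum_congr rfl
    intro τ _
    ring
  simp_rw [key] at hL
  rw [Finset.sum_eq_single (⟨(ε, ε'), h⟩ : {p : Vg g × Vg g // (∑ i, p.1 i * p.2 i : ZMod 2) = 0})] at hL
  · rw [if_pos ⟨rfl, rfl⟩] at hL
    rcases mul_eq_zero.mp hL with h1 | h1
    · exact h1
    · exfalso
      rcases mul_eq_zero.mp h1 with h2 | h2
      · by_cases hε : ε = 0
        · rw [if_pos hε] at h2; exact one_ne_zero h2
        · rw [if_neg hε] at h2; exact two_ne_zero h2
      · exact pow_ne_zero g (two_ne_zero) h2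
  · intro q _ hq
    rw [if_neg, mul_zero]
    rintro ⟨h1, h2⟩
    exact hq (Subtype.ext (Prod.ext h1 h2))
  · intro habs
    exact absurd (Finset.mem_univ _) habs

end QeAux

/-- The quadratics `Q[ε,ε']` with `ε·ε' = 0` form a basis of the space of homogeneous
quadratic polynomials; in particular there are exactly `2^{g−1}(2^g + 1)` of them. -/
theorem Qe_basis (g : ℕ) (hg : 1 ≤ g) :
    LinearIndependent ℂ
      (fun p : {p : Vg g × Vg g // (∑ i, p.1 i * p.2 i : ZMod 2) = 0} => Qe p.1.1 p.1.2) ∧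
    Submodule.span ℂ
      (Set.range
        (fun p : {p : Vg g × Vg g // (∑ i, p.1 i * p.2 i : ZMod 2) = 0} => Qe p.1.1 p.1.2))
      = homogeneousSubmodule (Vg g) ℂ 2 ∧
    Nat.card {p : Vg g × Vg g // (∑ i, p.1 i * p.2 i : ZMod 2) = 0}
      = 2 ^ (g - 1) * (2 ^ g + 1) :=
  ⟨QeAux.indep_part g, QeAux.span_part g, QeAux.card_part g hg⟩
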